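/- Let X : [0,L] → ℝ^d be a piecewise continuously differentiable path with X(0) = 0 and let p : ℝ^d → ℝ^m be a polynomial map with p(0) = 0. Then for every w ∈ T(ℝ^m), ⟨σ(p(X)), w⟩ = ⟨σ(X), M_p(w)⟩, where p(X) denotes the path t ↦ p(X(t)). Equivalently, σ(p(X)) = M_p^*(σ(X)). -/

import Mathlib

noncomputable section

open MeasureTheory

/-- Words in the alphabet `{1,…,d}`. -/
abbrev Word (d : ℕ) := List (Fin d)

/-- `T(ℝ^d)`: the real vector space with basis the words in `{1,…,d}`. -/
abbrev Tens (d : ℕ) := Word d →₀ ℝ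

namespace SigPaper

variable {d m s : ℕ}

/-- The basis word `w` as an element of `T(ℝ^d)`. -/
def wordT (w : Word d) : Tens d := Finsupp.single w 1

/-- The shuffle product of two words. -/
def shuffleWord : Word d → Word d → Tens d
  | [], v => Finsupp.single v 1
  | u, [] => Finsupp.single u 1
  | a :: u, b :: v =>
      Finsupp.mapDomain (fun w => a :: w) (shuffleWord u (b :: v)) +
      Finsupp.mapDomain (fun w => b :: w) (shuffleWord (a :: u) v)
  termination_by u v => u.length + v.length
  decreasing_by all_goals simp +arith +decide

/-- The shuffle product `⧢` on `T(ℝ^d)`, the bilinear extension of the shuffle of words. -/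
def shuffle (x y : Tens d) : Tens d :=
  x.sum fun u a => y.sum fun v b => (a * b) • shuffleWord u v

/-- The operator appending the letter `i` at the end of every word (`T_i^+`). -/
def appendLetter (i : Fin d) (x : Tens d) : Tens d :=
  Finsupp.mapDomain (fun w => w ++ [i]) x

/-- The right half-shuffle of two words: `w ≻ (v∘i) = (w ⧢ v)∘i` (zero if the right word
is empty). -/
def halfShuffleWord (u v : Word d) : Tens d :=
  match v.getLast? with
  | none => 0
  | some i => appendLetter i (shuffleWord u v.dropLast)

/-- The right half-shuffle `≻`, extended bilinearly. -/
def halfShuffle (x y : Tens d) : Tens d :=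
  x.sum fun u a => y.sum fun v b => (a * b) • halfShuffleWord u v

/-- The letter-appending operator `T_i^+`. -/
def Tplus (i : Fin d) : Tens d → Tens d := appendLetter i

/-- `T_i^-` on a word: removes the last letter if it equals `i`, otherwise `0`. -/
def TminusWord (i : Fin d) (w : Word d) : Tens d :=
  match w.getLast? with
  | none => 0
  | some j => if j = i then Finsupp.single w.dropLast 1 else 0

/-- The letter-removing operator `T_i^-`. -/
def Tminus (i : Fin d) (x : Tens d) : Tens d := x.sum fun w a => a • TminusWord i w

/-- The single-letter word `i` in `T(ℝ^d)`. -/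
def letterT (i : Fin d) : Tens d := Finsupp.single [i] 1

/-- Shuffle powers `x^{⧢ n}`. -/
def shufflePow (x : Tens d) : ℕ → Tens d
  | 0 => Finsupp.single [] 1
  | n + 1 => shuffle (shufflePow x n) x

/-- Shuffle product of a list of elements. -/
def shuffleList : List (Tens d) → Tens d
  | [] => Finsupp.single [] 1
  | x :: xs => shuffle x (shuffleList xs)

/-- Image of the monomial `x^t` under `φ_d`: the shuffle product of its letters. -/
def phiMon (t : Fin d →₀ ℕ) : Tens d :=
  shuffleList ((List.finRange d).map fun i => shufflePow (letterT i) (t i))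

/-- The embedding `φ_d : ℝ[x₁,…,x_d] → (T(ℝ^d), ⧢)` sending the monomial
`x_{i₁}⋯x_{i_l}` to `i₁ ⧢ ⋯ ⧢ i_l`. -/
def phi (f : MvPolynomial (Fin d) ℝ) : Tens d :=
  f.support.sum fun t => f.coeff t • phiMon t

/-- A polynomial map `p : ℝ^d → ℝ^m`, given by `m` polynomials in `d` variables. -/
abbrev PolyMap (d m : ℕ) := Fin m → MvPolynomial (Fin d) ℝ

/-- `k_p^{ij} = φ_d(∂p_i/∂x_j) ∈ T(ℝ^d)`. -/
def kP (p : PolyMap d m) (i : Fin m) (j : Fin d) : Tens d :=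
  phi (MvPolynomial.pderiv j (p i))

/-- Auxiliary: `M_p` on reversed words, so that `M_p(e) = e` and
`M_p(w∘i) = Σ_j (M_p(w) ⧢ k_p^{ij})∘j`. -/
def MpRev (p : PolyMap d m) : List (Fin m) → Tens d
  | [] => Finsupp.single [] 1
  | i :: w => ∑ j : Fin d, appendLetter j (shuffle (MpRev p w) (kP p i j))

/-- `M_p` on a word. -/
def MpWord (p : PolyMap d m) (w : Word m) : Tens d := MpRev p w.reverse

/-- The linear map `M_p : T(ℝ^m) → T(ℝ^d)`. -/
def Mp (p : PolyMap d m) (x : Tens m) : Tens d := x.sum fun w a => a • MpWord p w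

/-- `X : [0,L] → ℝ^d` is piecewise continuously differentiable: there is a partition
`0 = t₀ ≤ t₁ ≤ ⋯ ≤ t_n = L` such that `X` is `C¹` on each subinterval. -/
def PiecewiseC1 (X : ℝ → Fin d → ℝ) (L : ℝ) : Prop :=
  ∃ (n : ℕ) (t : Fin (n + 1) → ℝ), Monotone t ∧ t 0 = 0 ∧ t (Fin.last n) = L ∧
    ∀ k : Fin n, ContDiffOn ℝ 1 X (Set.Icc (t k.castSucc) (t k.succ))

/-- Iterated-integral signature coefficients, on reversed words:
`⟨σ(X|_{[0,t]}), w∘i⟩ = ∫_0^t ⟨σ(X|_{[0,r]}), w⟩ Ẋ^i_r dr`. -/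
def sigRev (X : ℝ → Fin d → ℝ) : List (Fin d) → ℝ → ℝ
  | [], _ => 1
  | i :: w, t => ∫ r in (0:ℝ)..t, sigRev X w r * deriv (fun u => X u i) r

/-- `⟨σ(X|_{[0,L]}), w⟩`, the signature coefficient of the word `w`. -/
def sigWord (X : ℝ → Fin d → ℝ) (L : ℝ) (w : Word d) : ℝ := sigRev X w.reverse L

/-- The pairing `⟨σ(X|_{[0,L]}), x⟩` for `x ∈ T(ℝ^d)`. -/
def sigT (X : ℝ → Fin d → ℝ) (L : ℝ) (x : Tens d) : ℝ :=
  x.sum fun w a => a * sigWord X L w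

/-- The transformed path `p(X) : t ↦ p(X(t))`. -/
def pPath (p : PolyMap d m) (X : ℝ → Fin d → ℝ) : ℝ → Fin m → ℝ :=
  fun t i => MvPolynomial.eval (X t) (p i)

/-- The translated polynomial map `p̃(y) = p(y + x₀) − p(x₀)`, satisfying `p̃(0) = 0`. -/
def ptilde (p : PolyMap d m) (x0 : Fin d → ℝ) : PolyMap d m := fun i =>
  MvPolynomial.aeval (fun j => MvPolynomial.X j + MvPolynomial.C (x0 j)) (p i) -
    MvPolynomial.C (MvPolynomial.eval x0 (p i))

/-- The pairing `⟨exp_∘(L·𝟙), x⟩` for `x ∈ T(ℝ¹)`: the coefficient of the word of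
length `n` in `exp_∘(L·𝟙)` is `Lⁿ/n!`. -/
def expPair (L : ℝ) (x : Tens 1) : ℝ :=
  x.sum fun w a => a * (L ^ w.length / (w.length.factorial : ℝ))

/-- The pairing `⟨σ(X) ∘ σ(Y), x⟩` of the concatenation product of two signatures with
`x ∈ T(ℝ^d)`: on a word `w` it is `Σ_{u∘v = w} ⟨σ(X), u⟩·⟨σ(Y), v⟩`. -/
def concatPair (X Y : ℝ → Fin d → ℝ) (L : ℝ) (x : Tens d) : ℝ :=
  x.sum fun w a =>
    a * ∑ k ∈ Finset.range (w.length + 1), sigWord X L (w.take k) * sigWord Y L (w.drop k)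


/-! ### Auxiliary combinatorial lemmas -/

open Finsupp Set

@[simp] lemma shuffleWord_nil_left (v : Word d) :
    shuffleWord ([] : Word d) v = Finsupp.single v 1 := shuffleWord.eq_1 v

@[simp] lemma shuffleWord_nil_right (u : Word d) :
    shuffleWord u ([] : Word d) = Finsupp.single u 1 := by
  cases u with
  | nil => exact shuffleWord.eq_1 []
  | cons a u => exact shuffleWord.eq_2 _ (by simp)

lemma shuffleWord_cons_cons (a b : Fin d) (u v : Word d) :
    shuffleWord (a :: u) (b :: v) =
      Finsupp.mapDomain (fun w => a :: w) (shuffleWord u (b :: v)) +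
      Finsupp.mapDomain (fun w => b :: w) (shuffleWord (a :: u) v) := shuffleWord.eq_3 a u b v

@[simp] lemma appendLetter_single (i : Fin d) (w : Word d) (c : ℝ) :
    appendLetter i (Finsupp.single w c) = Finsupp.single (w ++ [i]) c :=
  Finsupp.mapDomain_single

@[simp] lemma appendLetter_add (i : Fin d) (x y : Tens d) :
    appendLetter i (x + y) = appendLetter i x + appendLetter i y :=
  Finsupp.mapDomain_add

lemma mapDomain_cons_appendLetter (a i : Fin d) (x : Tens d) :
    Finsupp.mapDomain (fun w => a :: w) (appendLetter i x)
      = appendLetter i (Finsupp.mapDomain (fun w => a :: w) x) := by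
  unfold appendLetter
  rw [← Finsupp.mapDomain_comp, ← Finsupp.mapDomain_comp]
  rfl
lemma shuffleWord_append_append :
    ∀ (n : ℕ) (u v : Word d) (a b : Fin d), u.length + v.length ≤ n →
      shuffleWord (u ++ [a]) (v ++ [b]) =
        appendLetter a (shuffleWord u (v ++ [b])) +
          appendLetter b (shuffleWord (u ++ [a]) v) := by
  intro n
  induction n with
  | zero =>
    rintro u v a b h
    rw [Nat.le_zero, Nat.add_eq_zero] at h
    obtain ⟨hu, hv⟩ := h
    rw [List.length_eq_zero_iff] at hu hv
    subst hu; subst hv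
    simp [shuffleWord_cons_cons, add_comm]
  | succ n ih =>
    rintro u v a b h
    match u, v with
    | [], [] => simp [shuffleWord_cons_cons, add_comm]
    | [], c :: v' =>
      have h' : ([] : Word d).length + v'.length ≤ n := by
        simp at h ⊢; omega
      have hih := ih [] v' a b h'
      simp only [List.nil_append] at hih ⊢
      rw [show (c :: v') ++ [b] = c :: (v' ++ [b]) from rfl,
        shuffleWord_cons_cons, hih, shuffleWord_cons_cons]
      simp only [shuffleWord_nil_left, shuffleWord_nil_right, Finsupp.mapDomain_add,
        Finsupp.mapDomain_single, appendLetter_add, appendLetter_single,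
        mapDomain_cons_appendLetter]
      simp only [List.cons_append, List.nil_append, List.append_assoc, List.singleton_append]
      abel
    | c :: u', [] =>
      have h' : u'.length + ([] : Word d).length ≤ n := by
        simp at h ⊢; omega
      have hih := ih u' [] a b h'
      simp only [List.nil_append] at hih ⊢
      rw [show (c :: u') ++ [a] = c :: (u' ++ [a]) from rfl,
        shuffleWord_cons_cons, hih, shuffleWord_cons_cons]
      simp only [shuffleWord_nil_left, shuffleWord_nil_right, Finsupp.mapDomain_add,
        Finsupp.mapDomain_single, appendLetter_add, appendLetter_single,
        mapDomain_cons_appendLetter]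
      simp only [List.cons_append, List.nil_append, List.append_assoc, List.singleton_append]
      abel
    | c :: u', e :: v' =>
      have h1 : u'.length + (e :: v').length ≤ n := by simp at h ⊢; omega
      have h2 : (c :: u').length + v'.length ≤ n := by simp at h ⊢; omega
      rw [show (c :: u') ++ [a] = c :: (u' ++ [a]) from rfl,
        show (e :: v') ++ [b] = e :: (v' ++ [b]) from rfl,
        shuffleWord_cons_cons,
        show e :: (v' ++ [b]) = (e :: v') ++ [b] from rfl,
        ih u' (e :: v') a b h1,
        show c :: (u' ++ [a]) = (c :: u') ++ [a] from rfl,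
        ih (c :: u') v' a b h2]
      rw [show (c :: u') ++ [a] = c :: (u' ++ [a]) from rfl,
        show (e :: v') ++ [b] = e :: (v' ++ [b]) from rfl,
        shuffleWord_cons_cons, shuffleWord_cons_cons]
      simp only [Finsupp.mapDomain_add, appendLetter_add, mapDomain_cons_appendLetter,
        List.cons_append]
      abel

lemma mapDomain_reverse_cons (a : Fin d) (x : Tens d) :
    Finsupp.mapDomain List.reverse (Finsupp.mapDomain (fun w : Word d => a :: w) x)
      = appendLetter a (Finsupp.mapDomain List.reverse x) := by
  unfold appendLetter
  rw [← Finsupp.mapDomain_comp, ← Finsupp.mapDomain_comp]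
  congr 1
  funext w
  simp

lemma mapDomain_reverse_shuffleWord :
    ∀ (n : ℕ) (u v : Word d), u.length + v.length ≤ n →
      Finsupp.mapDomain List.reverse (shuffleWord u v)
        = shuffleWord u.reverse v.reverse := by
  intro n
  induction n with
  | zero =>
    rintro u v h
    rw [Nat.le_zero, Nat.add_eq_zero] at h
    obtain ⟨hu, hv⟩ := h
    rw [List.length_eq_zero_iff] at hu hv
    subst hu; subst hv
    simp
  | succ n ih =>
    rintro u v h
    match u, v with
    | [], v => simp
    | c :: u', [] => simp
    | a :: u', b :: v' =>
      have h1 : u'.length + (b :: v').length ≤ n := by simp at h ⊢; omega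
      have h2 : (a :: u').length + v'.length ≤ n := by simp at h ⊢; omega
      rw [shuffleWord_cons_cons, Finsupp.mapDomain_add, mapDomain_reverse_cons,
        mapDomain_reverse_cons, ih _ _ h1, ih _ _ h2,
        List.reverse_cons, List.reverse_cons,
        shuffleWord_append_append (u'.reverse.length + v'.reverse.length) _ _ _ _ le_rfl]

lemma shuffleWord_reverse (u v : Word d) :
    Finsupp.mapDomain List.reverse (shuffleWord u v) = shuffleWord u.reverse v.reverse :=
  mapDomain_reverse_shuffleWord _ u v le_rfl

/-! ### Pairing with reversed words -/

/-- Pairing of `x ∈ T(ℝ^d)` against `sigRev` (words read reversed). -/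
def rpair (X : ℝ → Fin d → ℝ) (t : ℝ) (x : Tens d) : ℝ :=
  x.sum fun w a => a * sigRev X w t

@[simp] lemma rpair_single (X : ℝ → Fin d → ℝ) (t : ℝ) (w : Word d) (c : ℝ) :
    rpair X t (Finsupp.single w c) = c * sigRev X w t :=
  Finsupp.sum_single_index (by simp)

@[simp] lemma rpair_zero (X : ℝ → Fin d → ℝ) (t : ℝ) : rpair X t 0 = 0 :=
  Finsupp.sum_zero_index

@[simp] lemma rpair_add (X : ℝ → Fin d → ℝ) (t : ℝ) (x y : Tens d) :
    rpair X t (x + y) = rpair X t x + rpair X t y :=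
  Finsupp.sum_add_index' (by simp) (by intros; ring)

@[simp] lemma rpair_smul (X : ℝ → Fin d → ℝ) (t : ℝ) (c : ℝ) (x : Tens d) :
    rpair X t (c • x) = c * rpair X t x := by
  rw [rpair, Finsupp.sum_smul_index (by simp), rpair, Finsupp.mul_sum]
  exact Finset.sum_congr rfl fun w _ => by ring

lemma rpair_finsetSum {α : Type*} (X : ℝ → Fin d → ℝ) (t : ℝ) (s : Finset α)
    (f : α → Tens d) : rpair X t (∑ i ∈ s, f i) = ∑ i ∈ s, rpair X t (f i) := by
  classical
  induction s using Finset.induction with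
  | empty => simp
  | insert _ _ h ih => rw [Finset.sum_insert h, Finset.sum_insert h, rpair_add, ih]

lemma rpair_mapDomain (X : ℝ → Fin d → ℝ) (t : ℝ) (f : Word d → Word d) (x : Tens d) :
    rpair X t (Finsupp.mapDomain f x) = x.sum fun w a => a * sigRev X (f w) t :=
  Finsupp.sum_mapDomain_index (by simp) (by intros; ring)

lemma sigT_eq_rpair (X : ℝ → Fin d → ℝ) (t : ℝ) (x : Tens d) :
    sigT X t x = rpair X t (Finsupp.mapDomain List.reverse x) := by
  rw [rpair_mapDomain]; rfl

@[simp] lemma sigT_single (X : ℝ → Fin d → ℝ) (t : ℝ) (w : Word d) (c : ℝ) :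
    sigT X t (Finsupp.single w c) = c * sigWord X t w :=
  Finsupp.sum_single_index (by simp)

@[simp] lemma sigT_add (X : ℝ → Fin d → ℝ) (t : ℝ) (x y : Tens d) :
    sigT X t (x + y) = sigT X t x + sigT X t y :=
  Finsupp.sum_add_index' (by simp) (by intros; ring)

@[simp] lemma sigT_smul (X : ℝ → Fin d → ℝ) (t : ℝ) (c : ℝ) (x : Tens d) :
    sigT X t (c • x) = c * sigT X t x := by
  rw [sigT, Finsupp.sum_smul_index (by simp), sigT, Finsupp.mul_sum]
  exact Finset.sum_congr rfl fun w _ => by ring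

lemma sigT_finsetSum {α : Type*} (X : ℝ → Fin d → ℝ) (t : ℝ) (s : Finset α)
    (f : α → Tens d) : sigT X t (∑ i ∈ s, f i) = ∑ i ∈ s, sigT X t (f i) := by
  classical
  induction s using Finset.induction with
  | empty => simp [sigT]
  | insert _ _ h ih => rw [Finset.sum_insert h, Finset.sum_insert h, sigT_add, ih]

@[simp] lemma sigWord_nil (X : ℝ → Fin d → ℝ) (t : ℝ) : sigWord X t ([] : Word d) = 1 := rfl

/-! ### Analytic helpers -/

lemma intervalIntegrable_of_icc {f : ℝ → ℝ} {L s t : ℝ}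
    (hf : IntegrableOn f (Icc 0 L)) (hs : s ∈ Icc (0:ℝ) L) (ht : t ∈ Icc (0:ℝ) L) :
    IntervalIntegrable f volume s t := by
  rw [intervalIntegrable_iff]
  refine hf.mono_set fun x hx => ?_
  rw [Set.uIoc] at hx
  exact ⟨le_trans (le_min hs.1 ht.1) hx.1.le, le_trans hx.2 (max_le hs.2 ht.2)⟩

lemma integral_triangle_swap {f g : ℝ → ℝ} {t : ℝ} (ht : 0 ≤ t)
    (hf : IntegrableOn f (Icc 0 t)) (hg : IntegrableOn g (Icc 0 t)) :
    ∫ y in (0:ℝ)..t, (∫ x in (0:ℝ)..y, f x) * g y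
      = ∫ x in (0:ℝ)..t, f x * ∫ y in x..t, g y := by
  have hf' : IntegrableOn f (Ioc 0 t) := hf.mono_set Set.Ioc_subset_Icc_self
  have hg' : IntegrableOn g (Ioc 0 t) := hg.mono_set Set.Ioc_subset_Icc_self
  set μ := volume.restrict (Ioc (0:ℝ) t) with hμ
  have hprod : Integrable (fun z : ℝ × ℝ => f z.1 * g z.2) (μ.prod μ) :=
    Integrable.mul_prod hf' hg'
  have hmeas : MeasurableSet {z : ℝ × ℝ | z.1 ≤ z.2} :=
    measurableSet_le measurable_fst measurable_snd
  set H : ℝ → ℝ → ℝ := fun x y => if x ≤ y then f x * g y else 0 with hH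
  have hHint : Integrable (Function.uncurry H) (μ.prod μ) := by
    have heq : Function.uncurry H
        = {z : ℝ × ℝ | z.1 ≤ z.2}.indicator fun z => f z.1 * g z.2 := by
      funext z
      simp only [Function.uncurry, hH, Set.indicator_apply, Set.mem_setOf_eq]
    rw [heq]
    exact hprod.indicator hmeas
  have swap : ∫ x, ∫ y, H x y ∂μ ∂μ = ∫ y, ∫ x, H x y ∂μ ∂μ :=
    MeasureTheory.integral_integral_swap hHint
  have sideA : ∫ x, (∫ y, H x y ∂μ) ∂μ = ∫ x in (0:ℝ)..t, f x * ∫ y in x..t, g y := by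
    rw [intervalIntegral.integral_of_le ht]
    refine MeasureTheory.setIntegral_congr_fun measurableSet_Ioc fun x hx => ?_
    have h1 : (fun y => H x y) = (Set.Ici x).indicator fun y => f x * g y := by
      funext y
      simp [hH, Set.indicator_apply, Set.mem_Ici]
    rw [h1, MeasureTheory.integral_indicator measurableSet_Ici, hμ,
      Measure.restrict_restrict measurableSet_Ici]
    have h2 : Set.Ici x ∩ Set.Ioc 0 t = Set.Icc x t := by
      ext z
      simp only [Set.mem_inter_iff, Set.mem_Ici, Set.mem_Ioc, Set.mem_Icc]
      constructor
      · rintro ⟨h1, h2, h3⟩; exact ⟨h1, h3⟩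
      · rintro ⟨h1, h2⟩; exact ⟨h1, lt_of_lt_of_le hx.1 h1, h2⟩
    rw [h2, MeasureTheory.integral_Icc_eq_integral_Ioc,
      ← intervalIntegral.integral_of_le hx.2, intervalIntegral.integral_const_mul]
  have sideB : ∫ y, (∫ x, H x y ∂μ) ∂μ
      = ∫ y in (0:ℝ)..t, (∫ x in (0:ℝ)..y, f x) * g y := by
    rw [intervalIntegral.integral_of_le ht]
    refine MeasureTheory.setIntegral_congr_fun measurableSet_Ioc fun y hy => ?_
    have h1 : (fun x => H x y) = (Set.Iic y).indicator fun x => f x * g y := by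
      funext x
      simp [hH, Set.indicator_apply, Set.mem_Iic]
    rw [h1, MeasureTheory.integral_indicator measurableSet_Iic, hμ,
      Measure.restrict_restrict measurableSet_Iic]
    have h2 : Set.Iic y ∩ Set.Ioc 0 t = Set.Ioc 0 y := by
      ext z
      simp only [Set.mem_inter_iff, Set.mem_Iic, Set.mem_Ioc]
      constructor
      · rintro ⟨h1, h2, h3⟩; exact ⟨h2, h1⟩
      · rintro ⟨h1, h2⟩; exact ⟨h2, h1, le_trans h2 hy.2⟩
    rw [h2, ← intervalIntegral.integral_of_le hy.1.le, intervalIntegral.integral_mul_const]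
  rw [← sideA, ← sideB]
  exact swap.symm

lemma contOn_primitive {f : ℝ → ℝ} {T : ℝ} (hT : 0 ≤ T) (hf : IntegrableOn f (Icc 0 T)) :
    ContinuousOn (fun x => ∫ y in (0:ℝ)..x, f y) (Icc 0 T) := by
  have h := intervalIntegral.continuousOn_primitive_interval
    (a := (0:ℝ)) (b := T) (μ := volume) (f := f) (by rwa [Set.uIcc_of_le hT])
  rwa [Set.uIcc_of_le hT] at h

set_option maxHeartbeats 1000000 in
lemma primitive_mul {f g : ℝ → ℝ} {t : ℝ} (ht : 0 ≤ t)
    (hf : IntegrableOn f (Icc 0 t)) (hg : IntegrableOn g (Icc 0 t)) :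
    (∫ x in (0:ℝ)..t, f x) * (∫ x in (0:ℝ)..t, g x)
      = ∫ x in (0:ℝ)..t, (f x * (∫ y in (0:ℝ)..x, g y) + (∫ y in (0:ℝ)..x, f y) * g x) := by
  have hFc := contOn_primitive ht hf
  have hGc := contOn_primitive ht hg
  have int1 : IntegrableOn (fun x => f x * ∫ y in (0:ℝ)..x, g y) (Icc 0 t) :=
    hf.mul_continuousOn hGc isCompact_Icc
  have int2 : IntegrableOn (fun x => (∫ y in (0:ℝ)..x, f y) * g x) (Icc 0 t) :=
    IntegrableOn.continuousOn_mul hFc hg isCompact_Icc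
  have hTail : ContinuousOn (fun x => ∫ y in x..t, g y) (Icc 0 t) := by
    have h := intervalIntegral.continuousOn_primitive_interval_left
      (a := (0:ℝ)) (b := t) (μ := volume) (f := g) (by rwa [Set.uIcc_of_le ht])
    rwa [Set.uIcc_of_le ht] at h
  have int3 : IntegrableOn (fun x => f x * ∫ y in x..t, g y) (Icc 0 t) :=
    hf.mul_continuousOn hTail isCompact_Icc
  have hmem0 : (0:ℝ) ∈ Icc (0:ℝ) t := Set.left_mem_Icc.mpr ht
  have hmemt : t ∈ Icc (0:ℝ) t := Set.right_mem_Icc.mpr ht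
  rw [intervalIntegral.integral_add
    (intervalIntegrable_of_icc int1 hmem0 hmemt) (intervalIntegrable_of_icc int2 hmem0 hmemt)]
  have key := integral_triangle_swap ht hf hg
  rw [key, ← intervalIntegral.integral_add
    (intervalIntegrable_of_icc int1 hmem0 hmemt) (intervalIntegrable_of_icc int3 hmem0 hmemt)]
  have heq : Set.EqOn (fun x => f x * (∫ y in (0:ℝ)..x, g y) + f x * ∫ y in x..t, g y)
      (fun x => f x * ∫ y in (0:ℝ)..t, g y) (Set.uIcc 0 t) := by
    intro x hx
    have hx' : x ∈ Icc (0:ℝ) t := by rwa [Set.uIcc_of_le ht] at hx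
    have hadj := intervalIntegral.integral_add_adjacent_intervals
      (intervalIntegrable_of_icc hg hmem0 hx') (intervalIntegrable_of_icc hg hx' hmemt)
    simp only [← mul_add, hadj]
  rw [intervalIntegral.integral_congr heq, intervalIntegral.integral_mul_const]

/-! ### Signature analytic lemmas -/

@[simp] lemma sigRev_nil (X : ℝ → Fin d → ℝ) (t : ℝ) : sigRev X ([] : Word d) t = 1 := rfl

lemma sigRev_cons (X : ℝ → Fin d → ℝ) (i : Fin d) (w : Word d) (t : ℝ) :
    sigRev X (i :: w) t = ∫ r in (0:ℝ)..t, sigRev X w r * deriv (fun u => X u i) r := by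
  rw [sigRev]

/-- Integrability of the coordinate derivatives on `[0, L]`. -/
def DerivIntegrable (X : ℝ → Fin d → ℝ) (L : ℝ) : Prop :=
  ∀ j, IntegrableOn (fun r => deriv (fun u => X u j) r) (Icc 0 L) volume

section Analytic

variable {X : ℝ → Fin d → ℝ} {L : ℝ}

lemma sigRev_continuousOn (hL : 0 ≤ L) (hD : DerivIntegrable X L) (w : Word d) :
    ContinuousOn (fun t => sigRev X w t) (Icc 0 L) := by
  induction w with
  | nil => exact continuousOn_const
  | cons i w ih =>
    have hint : IntegrableOn (fun r => sigRev X w r * deriv (fun u => X u i) r)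
        (Icc 0 L) volume := IntegrableOn.continuousOn_mul ih (hD i) isCompact_Icc
    have h := contOn_primitive hL hint
    refine h.congr fun t _ => ?_
    rw [sigRev_cons]

lemma sigRev_mul_deriv_integrableOn (hL : 0 ≤ L) (hD : DerivIntegrable X L)
    (w : Word d) (j : Fin d) :
    IntegrableOn (fun r => sigRev X w r * deriv (fun u => X u j) r) (Icc 0 L) volume :=
  IntegrableOn.continuousOn_mul (sigRev_continuousOn hL hD w) (hD j) isCompact_Icc

lemma rpair_continuousOn (hL : 0 ≤ L) (hD : DerivIntegrable X L) (x : Tens d) :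
    ContinuousOn (fun t => rpair X t x) (Icc 0 L) := by
  have h : (fun t => rpair X t x) = fun t => ∑ w ∈ x.support, x w * sigRev X w t := rfl
  rw [h]
  exact continuousOn_finset_sum _ fun w _ =>
    continuousOn_const.mul (sigRev_continuousOn hL hD w)

lemma rpair_mapDomain_cons (hL : 0 ≤ L) (hD : DerivIntegrable X L) (i : Fin d)
    (z : Tens d) {t : ℝ} (ht : t ∈ Icc (0:ℝ) L) :
    rpair X t (Finsupp.mapDomain (fun w => i :: w) z)
      = ∫ r in (0:ℝ)..t, rpair X r z * deriv (fun u => X u i) r := by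
  rw [rpair_mapDomain]
  have h1 : (z.sum fun w a => a * sigRev X (i :: w) t)
      = ∑ w ∈ z.support, ∫ r in (0:ℝ)..t, z w * (sigRev X w r * deriv (fun u => X u i) r) := by
    refine Finset.sum_congr rfl fun w _ => ?_
    dsimp only
    rw [sigRev_cons, ← intervalIntegral.integral_const_mul]
  rw [Finsupp.sum] at *
  rw [h1, ← intervalIntegral.integral_finset_sum]
  · refine intervalIntegral.integral_congr fun r _ => ?_
    simp only [← mul_assoc]
    rw [← Finset.sum_mul]
    rfl
  · intro w _
    exact intervalIntegrable_of_icc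
      ((sigRev_mul_deriv_integrableOn hL hD w i).const_mul (z w))
      (Set.left_mem_Icc.mpr hL) ht

lemma rpair_shuffleWord (hL : 0 ≤ L) (hD : DerivIntegrable X L) :
    ∀ (n : ℕ) (u v : Word d), u.length + v.length ≤ n →
      ∀ t ∈ Icc (0:ℝ) L, rpair X t (shuffleWord u v) = sigRev X u t * sigRev X v t := by
  intro n
  induction n with
  | zero =>
    rintro u v h t ht
    rw [Nat.le_zero, Nat.add_eq_zero] at h
    obtain ⟨hu, hv⟩ := h
    rw [List.length_eq_zero_iff] at hu hv
    subst hu; subst hv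
    simp
  | succ n ih =>
    rintro u v h t ht
    match u, v with
    | [], v => simp
    | c :: u', [] => simp
    | a :: u', b :: v' =>
      have h1 : u'.length + (b :: v').length ≤ n := by simp at h ⊢; omega
      have h2 : (a :: u').length + v'.length ≤ n := by simp at h ⊢; omega
      have hsub : Set.uIcc (0:ℝ) t ⊆ Icc 0 L := by
        rw [Set.uIcc_of_le ht.1]
        exact Set.Icc_subset_Icc le_rfl ht.2
      rw [shuffleWord_cons_cons, rpair_add,
        rpair_mapDomain_cons hL hD a _ ht, rpair_mapDomain_cons hL hD b _ ht]
      have e1 : (∫ r in (0:ℝ)..t, rpair X r (shuffleWord u' (b :: v'))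
            * deriv (fun u => X u a) r)
          = ∫ r in (0:ℝ)..t, (sigRev X u' r * sigRev X (b :: v') r)
            * deriv (fun u => X u a) r :=
        intervalIntegral.integral_congr fun r hr => by
          rw [ih u' (b :: v') h1 r (hsub hr)]
      have e2 : (∫ r in (0:ℝ)..t, rpair X r (shuffleWord (a :: u') v')
            * deriv (fun u => X u b) r)
          = ∫ r in (0:ℝ)..t, (sigRev X (a :: u') r * sigRev X v' r)
            * deriv (fun u => X u b) r :=
        intervalIntegral.integral_congr fun r hr => by
          rw [ih (a :: u') v' h2 r (hsub hr)]
      rw [e1, e2]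
      have hfI : IntegrableOn (fun r => sigRev X u' r * deriv (fun u => X u a) r)
          (Icc 0 t) volume :=
        (sigRev_mul_deriv_integrableOn hL hD u' a).mono_set (Set.Icc_subset_Icc le_rfl ht.2)
      have hgI : IntegrableOn (fun r => sigRev X v' r * deriv (fun u => X u b) r)
          (Icc 0 t) volume :=
        (sigRev_mul_deriv_integrableOn hL hD v' b).mono_set (Set.Icc_subset_Icc le_rfl ht.2)
      have pm := primitive_mul ht.1 hfI hgI
      have I1 : IntervalIntegrable (fun r => (sigRev X u' r * sigRev X (b :: v') r)
          * deriv (fun u => X u a) r) volume 0 t :=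
        intervalIntegrable_of_icc
          (IntegrableOn.continuousOn_mul
            ((sigRev_continuousOn hL hD u').mul (sigRev_continuousOn hL hD (b :: v')))
            (hD a) isCompact_Icc)
          (Set.left_mem_Icc.mpr hL) ht
      have I2 : IntervalIntegrable (fun r => (sigRev X (a :: u') r * sigRev X v' r)
          * deriv (fun u => X u b) r) volume 0 t :=
        intervalIntegrable_of_icc
          (IntegrableOn.continuousOn_mul
            ((sigRev_continuousOn hL hD (a :: u')).mul (sigRev_continuousOn hL hD v'))
            (hD b) isCompact_Icc)
          (Set.left_mem_Icc.mpr hL) ht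
      rw [← intervalIntegral.integral_add I1 I2]
      conv_rhs => rw [sigRev_cons X a u' t, sigRev_cons X b v' t, pm]
      refine intervalIntegral.integral_congr fun r _ => ?_
      rw [← sigRev_cons X a u' r, ← sigRev_cons X b v' r]
      ring

lemma sigT_shuffleWord (hL : 0 ≤ L) (hD : DerivIntegrable X L) (u v : Word d)
    {t : ℝ} (ht : t ∈ Icc (0:ℝ) L) :
    sigT X t (shuffleWord u v) = sigWord X t u * sigWord X t v := by
  rw [sigT_eq_rpair, shuffleWord_reverse,
    rpair_shuffleWord hL hD (u.reverse.length + v.reverse.length) u.reverse v.reverse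
      le_rfl t ht]
  rfl

lemma sigT_shuffle (hL : 0 ≤ L) (hD : DerivIntegrable X L) (x y : Tens d)
    {t : ℝ} (ht : t ∈ Icc (0:ℝ) L) :
    sigT X t (shuffle x y) = sigT X t x * sigT X t y := by
  rw [shuffle, Finsupp.sum, sigT_finsetSum]
  have h1 : ∀ u ∈ x.support, sigT X t (y.sum fun v b => (x u * b) • shuffleWord u v)
      = ∑ v ∈ y.support, (x u * y v) * (sigWord X t u * sigWord X t v) := by
    intro u _
    rw [Finsupp.sum, sigT_finsetSum]
    exact Finset.sum_congr rfl fun v _ => by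
      rw [sigT_smul, sigT_shuffleWord hL hD u v ht]
  rw [Finset.sum_congr rfl h1]
  rw [sigT, sigT, Finsupp.sum, Finsupp.sum, Finset.sum_mul_sum]
  exact Finset.sum_congr rfl fun u _ => Finset.sum_congr rfl fun v _ => by ring

end Analytic

/-! ### Piecewise C¹ paths: structural lemmas -/

lemma contOn_glue {E : Type*} [TopologicalSpace E] {f : ℝ → E} {A B C : ℝ}
    (hAB : A ≤ B) (hBC : B ≤ C) (h1 : ContinuousOn f (Icc A B))
    (h2 : ContinuousOn f (Icc B C)) : ContinuousOn f (Icc A C) := by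
  rw [← Set.Icc_union_Icc_eq_Icc hAB hBC]
  intro x hx
  rcases hx with hx | hx
  · refine (h1 x hx).union ?_
    by_cases h : x ∈ Icc B C
    · exact h2 x h
    · exact continuousWithinAt_of_notMem_closure (by rwa [closure_Icc])
  · refine ContinuousWithinAt.union ?_ (h2 x hx)
    by_cases h : x ∈ Icc A B
    · exact h1 x h
    · exact continuousWithinAt_of_notMem_closure (by rwa [closure_Icc])

/-- Every point of the big interval lies in some piece. -/
lemma exists_piece {a : ℕ → ℝ} (ha : Monotone a) :
    ∀ (n : ℕ) (x : ℝ), x ∈ Icc (a 0) (a n) → (n = 0 ∧ x = a 0) ∨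
      ∃ k, k < n ∧ x ∈ Icc (a k) (a (k + 1)) := by
  intro n
  induction n with
  | zero => exact fun x hx => Or.inl ⟨rfl, le_antisymm hx.2 hx.1⟩
  | succ n ih =>
    intro x hx
    by_cases h : x ≤ a n
    · rcases ih x ⟨hx.1, h⟩ with ⟨h0, hx0⟩ | ⟨k, hk, hxk⟩
      · subst h0
        exact Or.inr ⟨0, Nat.zero_lt_one, ⟨le_of_eq hx0.symm, hx0 ▸ ha (Nat.zero_le 1)⟩⟩
      · exact Or.inr ⟨k, Nat.lt_succ_of_lt hk, hxk⟩
    · exact Or.inr ⟨n, Nat.lt_succ_self n, ⟨le_of_not_ge h, hx.2⟩⟩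

/-- FTC on a partitioned interval, with differentiability only in the interiors
of the pieces. -/
lemma ftc_partition {a : ℕ → ℝ} (ha : Monotone a) {F f : ℝ → ℝ} :
    ∀ n : ℕ, ContinuousOn F (Icc (a 0) (a n)) → IntegrableOn f (Icc (a 0) (a n)) volume →
      (∀ k, k < n → ∀ x ∈ Ioo (a k) (a (k + 1)), HasDerivAt F (f x) x) →
      ∀ t ∈ Icc (a 0) (a n), ∫ r in (a 0)..t, f r = F t - F (a 0) := by
  intro n
  induction n with
  | zero =>
    intro _ _ _ t ht
    have : t = a 0 := le_antisymm ht.2 ht.1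
    subst this
    simp
  | succ n ih =>
    intro hcont hint hd t ht
    have hsub : Icc (a 0) (a n) ⊆ Icc (a 0) (a (n + 1)) :=
      Set.Icc_subset_Icc le_rfl (ha (Nat.le_succ n))
    have ihn := ih (hcont.mono hsub) (hint.mono_set hsub)
      (fun k hk => hd k (Nat.lt_succ_of_lt hk))
    by_cases h : t ≤ a n
    · exact ihn t ⟨ht.1, h⟩
    · have han : a n ∈ Icc (a 0) (a (n + 1)) := ⟨ha (Nat.zero_le n), ha (Nat.le_succ n)⟩
      have h0 : a 0 ∈ Icc (a 0) (a (n + 1)) :=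
        ⟨le_rfl, ha (Nat.zero_le (n + 1))⟩
      have ht' : t ∈ Icc (a 0) (a (n + 1)) := ht
      have hIa : IntervalIntegrable f volume (a 0) (a n) := by
        rw [intervalIntegrable_iff_integrableOn_Icc_of_le (ha (Nat.zero_le n))]
        exact hint.mono_set (Set.Icc_subset_Icc le_rfl (ha (Nat.le_succ n)))
      have hIb : IntervalIntegrable f volume (a n) t := by
        rw [intervalIntegrable_iff_integrableOn_Icc_of_le (le_of_not_ge h)]
        exact hint.mono_set (Set.Icc_subset_Icc (ha (Nat.zero_le n)) ht.2)
      rw [← intervalIntegral.integral_add_adjacent_intervals hIa hIb,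
        ihn (a n) ⟨ha (Nat.zero_le n), le_rfl⟩]
      have hftc : ∫ r in (a n)..t, f r = F t - F (a n) := by
        refine intervalIntegral.integral_eq_sub_of_hasDerivAt_of_le (le_of_not_ge h)
          (hcont.mono (Set.Icc_subset_Icc (ha (Nat.zero_le n)) ht.2)) ?_ hIb
        intro x hx
        exact hd n (Nat.lt_succ_self n) x ⟨hx.1, lt_of_lt_of_le hx.2 ht.2⟩
      rw [hftc]
      ring

/-! ### Consequences of `PiecewiseC1` -/

lemma hasDerivAt_proj {c : ℝ → Fin d → ℝ} {v : Fin d → ℝ} {r : ℝ} (j : Fin d)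
    (h : HasDerivAt c v r) : HasDerivAt (fun u => c u j) (v j) r := by
  have hp := (ContinuousLinearMap.proj (R := ℝ) (φ := fun _ : Fin d => ℝ) j).hasFDerivAt
    (x := c r)
  have := hp.comp_hasDerivAt r h
  exact this

lemma PiecewiseC1.nat {X : ℝ → Fin d → ℝ} {L : ℝ} (hX : PiecewiseC1 X L) :
    ∃ (N : ℕ) (a : ℕ → ℝ), Monotone a ∧ a 0 = 0 ∧ a N = L ∧
      ∀ k, k < N → ContDiffOn ℝ 1 X (Icc (a k) (a (k + 1))) := by
  obtain ⟨n, t, hmono, h0, hlast, hpieces⟩ := hX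
  refine ⟨n, fun k => t ⟨min k n, Nat.lt_succ_of_le (min_le_right k n)⟩, ?_, ?_, ?_, ?_⟩
  · intro k k' hk
    exact hmono (by simp only [Fin.mk_le_mk]; omega)
  · convert h0 using 2
    exact Fin.ext (by simp)
  · convert hlast using 2
    exact Fin.ext (by simp [Fin.last])
  · intro k hk
    have e1 : (⟨min k n, Nat.lt_succ_of_le (min_le_right k n)⟩ : Fin (n + 1))
        = (⟨k, hk⟩ : Fin n).castSucc := Fin.ext (by simp [Fin.castSucc]; omega)
    have e2 : (⟨min (k + 1) n, Nat.lt_succ_of_le (min_le_right (k + 1) n)⟩ : Fin (n + 1))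
        = (⟨k, hk⟩ : Fin n).succ := Fin.ext (by simp; omega)
    dsimp only
    rw [e1, e2]
    exact hpieces ⟨k, hk⟩

lemma PiecewiseC1.nonneg {X : ℝ → Fin d → ℝ} {L : ℝ} (hX : PiecewiseC1 X L) : 0 ≤ L := by
  obtain ⟨N, a, hm, h0, hN, _⟩ := hX.nat
  rw [← h0, ← hN]
  exact hm (Nat.zero_le N)

lemma PiecewiseC1.continuousOn {X : ℝ → Fin d → ℝ} {L : ℝ} (hX : PiecewiseC1 X L) :
    ContinuousOn X (Icc 0 L) := by
  obtain ⟨N, a, hm, h0, hN, hp⟩ := hX.nat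
  rw [← h0, ← hN]
  have key : ∀ n, n ≤ N → ContinuousOn X (Icc (a 0) (a n)) := by
    intro n
    induction n with
    | zero => intro _; rw [Set.Icc_self]; exact continuousOn_singleton _ _
    | succ n ih =>
      intro hn
      exact contOn_glue (hm (Nat.zero_le n)) (hm (Nat.le_succ n))
        (ih (Nat.le_of_succ_le hn)) (hp n hn).continuousOn
  exact key N le_rfl

lemma piece_deriv_integrable {X : ℝ → Fin d → ℝ} {A B : ℝ} (j : Fin d)
    (hC : ContDiffOn ℝ 1 X (Icc A B)) :
    IntegrableOn (fun r => deriv (fun u => X u j) r) (Icc A B) volume := by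
  rcases lt_or_ge A B with hAB | hAB
  · have hu := uniqueDiffOn_Icc hAB
    have hCj : ContDiffOn ℝ 1 (fun u => X u j) (Icc A B) := contDiffOn_pi.mp hC j
    have hcd : ContinuousOn (derivWithin (fun u => X u j) (Icc A B)) (Icc A B) :=
      hCj.continuousOn_derivWithin hu le_rfl
    have hint : IntegrableOn (derivWithin (fun u => X u j) (Icc A B)) (Icc A B) volume :=
      hcd.integrableOn_Icc
    refine hint.congr ?_
    have hpair : volume ({A, B} : Set ℝ) = 0 :=
      ((Set.countable_singleton B).insert A).measure_zero _
    have hnull : volume.restrict (Icc A B) (Ioo A B)ᶜ = 0 := by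
      rw [Measure.restrict_apply measurableSet_Ioo.compl]
      refine measure_mono_null ?_ hpair
      intro x hx
      simp only [Set.mem_compl_iff, Set.mem_inter_iff, Set.mem_Ioo, Set.mem_Icc,
        not_and, not_lt] at hx
      obtain ⟨h1, h2, h3⟩ := hx
      simp only [Set.mem_insert_iff, Set.mem_singleton_iff]
      rcases eq_or_lt_of_le h2 with h | h
      · left; exact h.symm
      · right; exact le_antisymm h3 (h1 h)
    have hae : ∀ᵐ x ∂(volume.restrict (Icc A B)), x ∈ Ioo A B := by
      rw [MeasureTheory.ae_iff]
      exact hnull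
    refine hae.mono fun x hx => ?_
    rw [derivWithin_of_mem_nhds (Icc_mem_nhds hx.1 hx.2)]
  · have hsub : Icc A B ⊆ {A} := by
      intro x hx
      have := le_antisymm (hx.2.trans hAB) hx.1
      simp [this]
    have h0 : volume.restrict (Icc A B) = 0 := by
      rw [Measure.restrict_eq_zero]
      exact measure_mono_null hsub (by simp)
    rw [IntegrableOn, h0]
    exact integrable_zero_measure

lemma PiecewiseC1.derivIntegrable {X : ℝ → Fin d → ℝ} {L : ℝ} (hX : PiecewiseC1 X L) :
    DerivIntegrable X L := by
  obtain ⟨N, a, hm, h0, hN, hp⟩ := hX.nat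
  intro j
  rw [← h0, ← hN]
  have key : ∀ n, n ≤ N →
      IntegrableOn (fun r => deriv (fun u => X u j) r) (Icc (a 0) (a n)) volume := by
    intro n
    induction n with
    | zero =>
      intro _
      rw [Set.Icc_self]
      have h0' : volume.restrict ({a 0} : Set ℝ) = 0 := by
        rw [Measure.restrict_eq_zero]; simp
      rw [IntegrableOn, h0']
      exact integrable_zero_measure
    | succ n ih =>
      intro hn
      rw [← Set.Icc_union_Icc_eq_Icc (hm (Nat.zero_le n)) (hm (Nat.le_succ n))]
      exact (ih (Nat.le_of_succ_le hn)).union (piece_deriv_integrable j (hp n hn))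
  exact key N le_rfl

lemma PiecewiseC1.interiorDiff {X : ℝ → Fin d → ℝ} {L : ℝ} (hX : PiecewiseC1 X L) :
    ∃ J : Set ℝ, J.Countable ∧
      ∀ x ∈ Icc (0:ℝ) L, x ∉ J → DifferentiableAt ℝ X x := by
  obtain ⟨N, a, hm, h0, hN, hp⟩ := hX.nat
  refine ⟨a '' Set.Iic N, (Set.finite_Iic N).image a |>.countable, ?_⟩
  intro x hx hxJ
  rw [← h0, ← hN] at hx
  rcases exists_piece hm N x hx with ⟨_, hx0⟩ | ⟨k, hk, hxk⟩
  · exact absurd ⟨0, Nat.zero_le N, hx0.symm⟩ hxJ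
  · have hxa : x ≠ a k := fun h => hxJ ⟨k, hk.le, h.symm⟩
    have hxb : x ≠ a (k + 1) := fun h => hxJ ⟨k + 1, hk, h.symm⟩
    have hxo : x ∈ Ioo (a k) (a (k + 1)) :=
      ⟨lt_of_le_of_ne hxk.1 (Ne.symm hxa), lt_of_le_of_ne hxk.2 hxb⟩
    have hd := ((hp k hk).differentiableOn one_ne_zero) x (Set.Ioo_subset_Icc_self hxo)
    exact hd.differentiableAt (Icc_mem_nhds hxo.1 hxo.2)

lemma PiecewiseC1.ftcLetter {X : ℝ → Fin d → ℝ} {L : ℝ} (hX : PiecewiseC1 X L) (j : Fin d) :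
    ∀ t ∈ Icc (0:ℝ) L, ∫ r in (0:ℝ)..t, deriv (fun u => X u j) r = X t j - X 0 j := by
  obtain ⟨N, a, hm, h0, hN, hp⟩ := hX.nat
  intro t ht
  have hcont : ContinuousOn (fun u => X u j) (Icc (a 0) (a N)) := by
    rw [h0, hN]
    exact (continuous_apply j).comp_continuousOn hX.continuousOn
  have hint : IntegrableOn (fun r => deriv (fun u => X u j) r) (Icc (a 0) (a N)) volume := by
    rw [h0, hN]; exact hX.derivIntegrable j
  have hd : ∀ k, k < N → ∀ x ∈ Ioo (a k) (a (k + 1)),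
      HasDerivAt (fun u => X u j) (deriv (fun u => X u j) x) x := by
    intro k hk x hx
    have hdx := ((hp k hk).differentiableOn one_ne_zero) x (Set.Ioo_subset_Icc_self hx)
    have : DifferentiableAt ℝ X x := hdx.differentiableAt (Icc_mem_nhds hx.1 hx.2)
    have hda : DifferentiableAt ℝ (fun u => X u j) x := differentiableAt_pi.mp this j
    exact hda.hasDerivAt
  have key := ftc_partition hm N hcont hint hd t (by rw [h0, hN]; exact ht)
  rw [h0] at key
  exact key

lemma eval_hasDerivAt {c : ℝ → Fin d → ℝ} {v : Fin d → ℝ} {r : ℝ} (hc : HasDerivAt c v r)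
    (f : MvPolynomial (Fin d) ℝ) :
    HasDerivAt (fun u => MvPolynomial.eval (c u) f)
      (∑ j, MvPolynomial.eval (c r) (MvPolynomial.pderiv j f) * v j) r := by
  induction f using MvPolynomial.induction_on with
  | C q =>
    simp only [MvPolynomial.eval_C, MvPolynomial.pderiv_C, map_zero, zero_mul,
      Finset.sum_const_zero]
    exact hasDerivAt_const r _
  | add p q hp hq =>
    have h := hp.add hq
    have hfun : (fun u => MvPolynomial.eval (c u) (p + q))
        = fun u => MvPolynomial.eval (c u) p + MvPolynomial.eval (c u) q := by
      funext u; rw [map_add]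
    rw [hfun]
    convert h using 1
    · rfl
    · rfl
    · rfl
    rw [← Finset.sum_add_distrib]
    exact Finset.sum_congr rfl fun x _ => by
      rw [(MvPolynomial.pderiv x).map_add, map_add (MvPolynomial.eval (c r)), add_mul]

  | mul_X p j hp =>
    have hj := hasDerivAt_proj j hc
    have h := hp.mul hj
    have hfun : (fun u => MvPolynomial.eval (c u) (p * MvPolynomial.X j))
        = fun u => MvPolynomial.eval (c u) p * c u j := by
      funext u
      simp [MvPolynomial.eval_mul]
    rw [hfun]
    convert h using 1
    · rfl
    · rfl
    · rfl
    have hterm : ∀ i : Fin d,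
        MvPolynomial.eval (c r) (MvPolynomial.pderiv i (p * MvPolynomial.X j)) * v i
          = MvPolynomial.eval (c r) (MvPolynomial.pderiv i p) * v i * c r j
            + (if j = i then MvPolynomial.eval (c r) p * v i else 0) := by
      intro i
      rw [MvPolynomial.pderiv_mul, map_add, map_mul, map_mul, MvPolynomial.eval_X,
        MvPolynomial.pderiv_X, Pi.single_apply]
      by_cases h : j = i <;> simp [h] <;> ring
    rw [Finset.sum_congr rfl (fun i _ => hterm i), Finset.sum_add_distrib, ← Finset.sum_mul]
    congr 1
    simp [Finset.sum_ite_eq', Finset.mem_univ]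

lemma contDiff_eval (f : MvPolynomial (Fin d) ℝ) :
    ContDiff ℝ 1 (fun y : Fin d → ℝ => MvPolynomial.eval y f) := by
  induction f using MvPolynomial.induction_on with
  | C q => simpa using contDiff_const (c := MvPolynomial.eval (0 : Fin d → ℝ)
      (MvPolynomial.C q))
  | add p q hp hq =>
    have h := hp.add hq
    convert h using 1
    funext y
    simp
  | mul_X p j hp =>
    have hproj : ContDiff ℝ 1 (fun y : Fin d → ℝ => y j) :=
      (ContinuousLinearMap.proj (R := ℝ) (φ := fun _ : Fin d => ℝ) j).contDiff
    have h := hp.mul hproj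
    convert h using 1
    · rfl
    · rfl
    funext y
    simp

lemma PiecewiseC1.pPath {X : ℝ → Fin d → ℝ} {L : ℝ} (hX : PiecewiseC1 X L)
    (p : PolyMap d m) : PiecewiseC1 (SigPaper.pPath p X) L := by
  obtain ⟨n, t, hm, h0, hl, hp⟩ := hX
  refine ⟨n, t, hm, h0, hl, fun k => ?_⟩
  refine contDiffOn_pi.mpr fun i => ?_
  exact (contDiff_eval (p i)).comp_contDiffOn (hp k)

/-! ### Pairing against `sigT`: integral representation and polynomial evaluation -/

section SigT

variable {X : ℝ → Fin d → ℝ} {L : ℝ}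

lemma sigT_continuousOn (hL : 0 ≤ L) (hD : DerivIntegrable X L) (y : Tens d) :
    ContinuousOn (fun t => sigT X t y) (Icc 0 L) :=
  (rpair_continuousOn hL hD (Finsupp.mapDomain List.reverse y)).congr
    fun t _ => sigT_eq_rpair X t y

lemma sigT_appendLetter (hL : 0 ≤ L) (hD : DerivIntegrable X L) (j : Fin d) (y : Tens d)
    {t : ℝ} (ht : t ∈ Icc (0:ℝ) L) :
    sigT X t (appendLetter j y)
      = ∫ r in (0:ℝ)..t, sigT X r y * deriv (fun u => X u j) r := by
  rw [sigT_eq_rpair]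
  have h : Finsupp.mapDomain List.reverse (appendLetter j y)
      = Finsupp.mapDomain (fun w => j :: w) (Finsupp.mapDomain List.reverse y) := by
    unfold appendLetter
    rw [← Finsupp.mapDomain_comp, ← Finsupp.mapDomain_comp]
    congr 1
    funext w
    simp
  rw [h, rpair_mapDomain_cons hL hD j _ ht]
  exact intervalIntegral.integral_congr fun r _ => by rw [← sigT_eq_rpair]

lemma sigT_empty (t : ℝ) : sigT X t (Finsupp.single ([] : Word d) (1:ℝ)) = 1 := by
  rw [sigT_single, sigWord_nil, mul_one]

lemma sigT_letterT (hX : PiecewiseC1 X L) (hX0 : X 0 = 0) (i : Fin d)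
    {t : ℝ} (ht : t ∈ Icc (0:ℝ) L) : sigT X t (letterT i) = X t i := by
  rw [letterT, sigT_single, one_mul, sigWord]
  rw [show ([i] : Word d).reverse = [i] from rfl, sigRev_cons]
  have h : (∫ r in (0:ℝ)..t, sigRev X ([] : Word d) r * deriv (fun u => X u i) r)
      = ∫ r in (0:ℝ)..t, deriv (fun u => X u i) r :=
    intervalIntegral.integral_congr fun r _ => by simp
  rw [h, hX.ftcLetter i t ht, hX0]
  simp

lemma sigT_shufflePow (hL : 0 ≤ L) (hD : DerivIntegrable X L) (x : Tens d) (n : ℕ)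
    {t : ℝ} (ht : t ∈ Icc (0:ℝ) L) :
    sigT X t (shufflePow x n) = (sigT X t x) ^ n := by
  induction n with
  | zero => rw [shufflePow, pow_zero]; exact sigT_empty t
  | succ n ih => rw [shufflePow, sigT_shuffle hL hD _ _ ht, ih, pow_succ]

lemma sigT_shuffleList (hL : 0 ≤ L) (hD : DerivIntegrable X L) (l : List (Tens d))
    {t : ℝ} (ht : t ∈ Icc (0:ℝ) L) :
    sigT X t (shuffleList l) = (l.map fun y => sigT X t y).prod := by
  induction l with
  | nil => rw [shuffleList, List.map_nil, List.prod_nil]; exact sigT_empty t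
  | cons y l ih =>
    rw [shuffleList, sigT_shuffle hL hD _ _ ht, ih, List.map_cons, List.prod_cons]

lemma sigT_phi (hX : PiecewiseC1 X L) (hX0 : X 0 = 0) (f : MvPolynomial (Fin d) ℝ)
    {t : ℝ} (ht : t ∈ Icc (0:ℝ) L) :
    sigT X t (phi f) = MvPolynomial.eval (X t) f := by
  have hL := hX.nonneg
  have hD := hX.derivIntegrable
  rw [phi, sigT_finsetSum, MvPolynomial.eval_eq']
  refine Finset.sum_congr rfl fun tt _ => ?_
  rw [sigT_smul]
  congr 1
  rw [phiMon, sigT_shuffleList hL hD _ ht, List.map_map, Fin.prod_univ_def]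
  refine congrArg List.prod (List.map_congr_left fun i _ => ?_)
  simp only [Function.comp_apply]
  rw [sigT_shufflePow hL hD _ _ ht, sigT_letterT hX hX0 i ht]

end SigT

/-! ### The main induction -/

lemma main_induction {X : ℝ → Fin d → ℝ} {L : ℝ} (hX : PiecewiseC1 X L) (hX0 : X 0 = 0)
    (p : PolyMap d m) :
    ∀ (w : List (Fin m)) {t : ℝ}, t ∈ Icc (0:ℝ) L →
      sigRev (pPath p X) w t = sigT X t (MpRev p w) := by
  have hL := hX.nonneg
  have hD := hX.derivIntegrable
  have hpX : PiecewiseC1 (pPath p X) L := hX.pPath p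
  have hDp := hpX.derivIntegrable
  obtain ⟨J, hJc, hJd⟩ := hX.interiorDiff
  have hXc := hX.continuousOn
  intro w
  induction w with
  | nil =>
    intro t ht
    rw [MpRev, sigRev, sigT_empty]
  | cons i w ih =>
    intro t ht
    rw [sigRev_cons]
    have hcong : (∫ r in (0:ℝ)..t,
          sigRev (pPath p X) w r * deriv (fun u => pPath p X u i) r)
        = ∫ r in (0:ℝ)..t, ∑ j, (sigT X r (MpRev p w)
            * MvPolynomial.eval (X r) (MvPolynomial.pderiv j (p i)))
            * deriv (fun u => X u j) r := by
      refine intervalIntegral.integral_congr_ae ?_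
      have hJnull : ∀ᵐ r : ℝ, r ∉ J := (measure_eq_zero_iff_ae_notMem).mp (hJc.measure_zero _)
      refine hJnull.mono fun r hrJ hrI => ?_
      rw [Set.uIoc_of_le ht.1] at hrI
      have hr' : r ∈ Icc (0:ℝ) L := ⟨hrI.1.le, hrI.2.trans ht.2⟩
      rw [ih hr']
      have hdiff : DifferentiableAt ℝ X r := hJd r hr' hrJ
      have hc : HasDerivAt X (deriv X r) r := hdiff.hasDerivAt
      have hev := eval_hasDerivAt hc (p i)
      have hder : deriv (fun u => pPath p X u i) r
          = ∑ j, MvPolynomial.eval (X r) (MvPolynomial.pderiv j (p i))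
              * deriv (fun u => X u j) r := by
        have h1 : deriv (fun u => pPath p X u i) r
            = ∑ j, MvPolynomial.eval (X r) (MvPolynomial.pderiv j (p i)) * deriv X r j :=
          hev.deriv
        rw [h1]
        exact Finset.sum_congr rfl fun j _ => by rw [(hasDerivAt_proj j hc).deriv]
      rw [hder, Finset.mul_sum]
      exact Finset.sum_congr rfl fun j _ => by ring
    rw [hcong]
    have hint : ∀ j : Fin d, IntervalIntegrable (fun r => (sigT X r (MpRev p w)
        * MvPolynomial.eval (X r) (MvPolynomial.pderiv j (p i)))
        * deriv (fun u => X u j) r) volume 0 t := by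
      intro j
      refine intervalIntegrable_of_icc ?_ (Set.left_mem_Icc.mpr hL) ht
      refine IntegrableOn.continuousOn_mul ?_ (hD j) isCompact_Icc
      exact (sigT_continuousOn hL hD (MpRev p w)).mul
        ((contDiff_eval (MvPolynomial.pderiv j (p i))).continuous.comp_continuousOn hXc)
    rw [intervalIntegral.integral_finset_sum (fun j _ => hint j)]
    have hterm : ∀ j : Fin d, (∫ r in (0:ℝ)..t, (sigT X r (MpRev p w)
        * MvPolynomial.eval (X r) (MvPolynomial.pderiv j (p i)))
        * deriv (fun u => X u j) r)
        = sigT X t (appendLetter j (shuffle (MpRev p w) (kP p i j))) := by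
      intro j
      rw [sigT_appendLetter hL hD j _ ht]
      refine intervalIntegral.integral_congr fun r hr => ?_
      have hr' : r ∈ Icc (0:ℝ) L := by
        rw [Set.uIcc_of_le ht.1] at hr
        exact ⟨hr.1, hr.2.trans ht.2⟩
      rw [sigT_shuffle hL hD _ _ hr', kP, sigT_phi hX hX0 _ hr']
    rw [Finset.sum_congr rfl fun j _ => hterm j, ← sigT_finsetSum, MpRev]



/-- For a piecewise continuously differentiable path `X : [0,L] → ℝ^d` with
`X(0) = 0` and a polynomial map `p` with `p(0) = 0`, one has
`⟨σ(p(X)), w⟩ = ⟨σ(X), M_p(w)⟩` for all `w ∈ T(ℝ^m)`, i.e. `σ(p(X)) = M_p^*(σ(X))`. -/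
theorem signature_polynomial_transform (d m : ℕ) (L : ℝ)
    (X : ℝ → Fin d → ℝ) (hX : PiecewiseC1 X L) (hX0 : X 0 = 0)
    (p : PolyMap d m) (hp : ∀ i, MvPolynomial.eval (0 : Fin d → ℝ) (p i) = 0) :
    ∀ x : Tens m, sigT (pPath p X) L x = sigT X L (Mp p x) := by
  intro x
  have hL := hX.nonneg
  have hmem : L ∈ Icc (0:ℝ) L := ⟨hL, le_rfl⟩
  rw [Mp, Finsupp.sum, sigT_finsetSum, sigT, Finsupp.sum]
  refine Finset.sum_congr rfl fun w _ => ?_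
  rw [sigT_smul]
  congr 1
  rw [sigWord, main_induction hX hX0 p w.reverse hmem, MpWord]

end SigPaper
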